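/- Let G be a finite group, F a field with char(F) not dividing |G|, H ⊆ K subgroups of G, e = Ĥ − K̂, A a transversal of K in G, and τ a transversal of H in K containing 1. Then the set { r(1−t)Ĥ : r ∈ A, t ∈ τ \ {1} } is an F-basis of the left ideal (FG)e. -/

import Mathlib

open scoped Classical

/-- `hat F S` is the element `Ŝ = (1/|S|) ∑_{s ∈ S} s` of the group algebra `F G`. -/
noncomputable def hat (F : Type*) [Field F] {G : Type*} [Group G] [Fintype G]
    (S : Subgroup G) : MonoidAlgebra F G :=
  (Nat.card S : F)⁻¹ • ∑ g : G, if g ∈ S then MonoidAlgebra.of F G g else 0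

section aux
variable {F : Type*} [Field F] {G : Type*} [Group G] [Fintype G]

lemma hat_apply (S : Subgroup G) (y : G) :
    (hat F S).coeff y = (Nat.card S : F)⁻¹ * (if y ∈ S then 1 else 0) := by
  classical
  simp only [hat, MonoidAlgebra.of_apply]
  rw [MonoidAlgebra.coeff_smul_apply, MonoidAlgebra.coeff_sum, Finset.sum_apply', smul_eq_mul]
  congr 1
  rw [Finset.sum_congr rfl (g := fun g => if g = y then (if g ∈ S then (1:F) else 0) else 0)]
  · rw [Finset.sum_ite_eq' Finset.univ y (fun g => if g ∈ S then (1:F) else 0)]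
    simp
  · intro g _
    by_cases hgy : g = y
    · subst hgy
      by_cases hg : g ∈ S <;> simp [hg, Finsupp.single_apply]
    · by_cases hg : g ∈ S <;> simp [hg, hgy, Finsupp.single_apply]

lemma single_mul_hat_apply (S : Subgroup G) (x y : G) :
    (MonoidAlgebra.single x (1:F) * hat F S).coeff y
      = (Nat.card S : F)⁻¹ * (if x⁻¹ * y ∈ S then 1 else 0) := by
  rw [MonoidAlgebra.coeff_single_mul_apply, one_mul, hat_apply]

lemma single_mul_hat (S : Subgroup G) {x : G} (hx : x ∈ S) :
    MonoidAlgebra.single x (1:F) * hat F S = hat F S := by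
  ext y
  rw [single_mul_hat_apply, hat_apply]
  congr 1
  simp [S.mul_mem_cancel_left (S.inv_mem hx)]

end aux
section aux2
variable {F : Type*} [Field F] {G : Type*} [Group G] [Fintype G]

lemma card_cast_ne_zero (hchar : (Fintype.card G : F) ≠ 0) (S : Subgroup G) :
    (Nat.card S : F) ≠ 0 := by
  intro h0
  apply hchar
  have := S.card_mul_index
  rw [Nat.card_eq_fintype_card (α := G)] at this
  rw [← this]
  push_cast
  rw [h0, zero_mul]

/-- If `z` is invariant under left multiplication by elements of `S`, then `Ŝ * z = z`. -/
lemma hat_mul_invariant (hchar : (Fintype.card G : F) ≠ 0) (S : Subgroup G)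
    (z : MonoidAlgebra F G) (hz : ∀ s ∈ S, MonoidAlgebra.single s (1:F) * z = z) :
    hat F S * z = z := by
  classical
  rw [hat]
  simp only [MonoidAlgebra.of_apply]
  rw [smul_mul_assoc, Finset.sum_mul]
  have : ∀ g ∈ Finset.univ, ((if g ∈ S then MonoidAlgebra.single g (1:F) else 0) * z)
      = (if g ∈ S then z else 0) := by
    intro g _
    by_cases hg : g ∈ S
    · simp [hg, hz g hg]
    · simp [hg]
  rw [Finset.sum_congr rfl this, Finset.sum_ite, Finset.sum_const, Finset.sum_const_zero,
    add_zero]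
  have hcard : (Finset.univ.filter (fun g => g ∈ S)).card = Nat.card S := by
    rw [Nat.card_eq_fintype_card, Fintype.card_subtype]
  rw [hcard, ← Nat.cast_smul_eq_nsmul F, smul_smul,
    inv_mul_cancel₀ (card_cast_ne_zero hchar S), one_smul]

end aux2
section aux3
variable {F : Type*} [Field F] {G : Type*} [Group G] [Fintype G]

lemma tau_count (H K : Subgroup G) (hHK : H ≤ K) (τ : Set G)
    (hτK : τ ⊆ (K : Set G)) (hτ : ∀ k ∈ K, ∃! t, t ∈ τ ∧ t⁻¹ * k ∈ H) :
    Nat.card H * τ.toFinset.card = Nat.card K := by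
  classical
  have hb : Function.Bijective (fun p : ↥τ × ↥H => (⟨(p.1 : G) * (p.2 : G),
      K.mul_mem (hτK p.1.2) (hHK p.2.2)⟩ : ↥K)) := by
    constructor
    · rintro ⟨⟨s, hs⟩, ⟨h, hh⟩⟩ ⟨⟨s', hs'⟩, ⟨h', hh'⟩⟩ hEq
      simp only [Subtype.mk_eq_mk] at hEq
      have hk : s * h ∈ K := K.mul_mem (hτK hs) (hHK hh)
      obtain ⟨t0, _, huniq⟩ := hτ (s * h) hk
      have h1 : s = t0 := huniq s ⟨hs, by simpa using hh⟩
      have h2 : s' = t0 := huniq s' ⟨hs', by rw [hEq]; simpa using hh'⟩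
      have hss : s = s' := h1.trans h2.symm
      subst hss
      have : h = h' := by
        have := mul_left_cancel hEq
        exact this
      simp [this]
    · rintro ⟨k, hk⟩
      obtain ⟨t, ⟨htτ, htH⟩, _⟩ := hτ k hk
      exact ⟨⟨⟨t, htτ⟩, ⟨t⁻¹ * k, htH⟩⟩, by simp⟩
  have := Fintype.card_of_bijective hb
  rw [Fintype.card_prod] at this
  have h1 : τ.toFinset.card = Fintype.card ↑τ := by
    rw [Set.toFinset_card]
  rw [Nat.card_eq_fintype_card, Nat.card_eq_fintype_card, h1, ← this]
  ring

end aux3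
section aux4
variable {F : Type*} [Field F] {G : Type*} [Group G] [Fintype G]

lemma tau_sum (hchar : (Fintype.card G : F) ≠ 0) (H K : Subgroup G) (hHK : H ≤ K) (τ : Set G)
    (hτK : τ ⊆ (K : Set G)) (hτ : ∀ k ∈ K, ∃! t, t ∈ τ ∧ t⁻¹ * k ∈ H) :
    ∑ s ∈ τ.toFinset, MonoidAlgebra.single s (1:F) * hat F H
      = ((Nat.card K : F) * (Nat.card H : F)⁻¹) • hat F K := by
  classical
  ext y
  rw [MonoidAlgebra.coeff_sum, Finset.sum_apply', MonoidAlgebra.coeff_smul_apply, hat_apply, smul_eq_mul]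
  rw [Finset.sum_congr rfl (fun s _ => single_mul_hat_apply H s y), ← Finset.mul_sum]
  have hclaim : (∑ s ∈ τ.toFinset, (if s⁻¹ * y ∈ H then (1:F) else 0))
      = if y ∈ K then 1 else 0 := by
    by_cases hy : y ∈ K
    · obtain ⟨t0, ⟨ht0τ, ht0H⟩, huniq⟩ := hτ y hy
      rw [Finset.sum_eq_single_of_mem t0 (Set.mem_toFinset.2 ht0τ)]
      · simp [ht0H, hy]
      · intro b hb hbne
        have hbτ := Set.mem_toFinset.1 hb
        by_cases hbH : b⁻¹ * y ∈ H
        · exact absurd (huniq b ⟨hbτ, hbH⟩) hbne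
        · simp [hbH]
    · rw [Finset.sum_eq_zero, if_neg hy]
      intro s hs
      have hsτ := Set.mem_toFinset.1 hs
      have : s⁻¹ * y ∉ H := by
        intro hmem
        exact hy (by simpa using K.mul_mem (hτK hsτ) (hHK hmem))
      simp [this]
  rw [hclaim]
  have hK := card_cast_ne_zero hchar K
  rw [Nat.card_eq_fintype_card] at hK
  by_cases hy : y ∈ K <;> simp [hy, Nat.card_eq_fintype_card]
  rw [mul_comm ((Fintype.card ↥K : F)) ((Fintype.card ↥H : F))⁻¹, mul_assoc,
    mul_inv_cancel₀ hK, mul_one]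

end aux4
section aux5
variable {F : Type*} [Field F] {G : Type*} [Group G] [Fintype G]

lemma gen_eq (S : Subgroup G) (r t : G) :
    MonoidAlgebra.of F G r * (1 - MonoidAlgebra.of F G t) * hat F S
      = MonoidAlgebra.single r (1:F) * hat F S
        - MonoidAlgebra.single (r*t) (1:F) * hat F S := by
  simp only [MonoidAlgebra.of_apply]
  rw [mul_sub, mul_one, MonoidAlgebra.single_mul_single, one_mul, sub_mul]

lemma gen_apply (S : Subgroup G) (r t y : G) :
    (MonoidAlgebra.of F G r * (1 - MonoidAlgebra.of F G t) * hat F S).coeff y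
      = (Nat.card S : F)⁻¹ *
          ((if r⁻¹ * y ∈ S then 1 else 0) - (if (r*t)⁻¹ * y ∈ S then 1 else 0)) := by
  rw [gen_eq, MonoidAlgebra.coeff_sub, Finsupp.sub_apply, single_mul_hat_apply, single_mul_hat_apply, mul_sub]

end aux5

theorem stmt3 {F : Type*} [Field F] {G : Type*} [Group G] [Fintype G]
    (hchar : (Fintype.card G : F) ≠ 0)
    (H K : Subgroup G) (hHK : H ≤ K)
    (A τ : Set G)
    -- `A` is a (left) transversal of `K` in `G`
    (hA : ∀ g : G, ∃! r, r ∈ A ∧ r⁻¹ * g ∈ K)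
    -- `τ` is a (left) transversal of `H` in `K` contained in `K` and containing `1`
    (hτK : τ ⊆ (K : Set G)) (hτ1 : (1 : G) ∈ τ)
    (hτ : ∀ k ∈ K, ∃! t, t ∈ τ ∧ t⁻¹ * k ∈ H) :
    LinearIndependent F
        (fun p : A × ↥(τ \ {1} : Set G) =>
          MonoidAlgebra.of F G (p.1 : G) *
            (1 - MonoidAlgebra.of F G (p.2 : G)) * hat F H) ∧
      Submodule.span F
          (Set.range (fun p : A × ↥(τ \ {1} : Set G) =>
            MonoidAlgebra.of F G (p.1 : G) *
              (1 - MonoidAlgebra.of F G (p.2 : G)) * hat F H)) =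
        Submodule.restrictScalars F (Ideal.span {hat F H - hat F K}) := by
    classical
  have hHne : (Nat.card H : F) ≠ 0 := card_cast_ne_zero hchar H
  have hKne : (Nat.card K : F) ≠ 0 := card_cast_ne_zero hchar K
  -- uniqueness of the transversal representative in `A`
  have hAuniq : ∀ r ∈ A, ∀ r' ∈ A, r'⁻¹ * r ∈ K → r' = r := by
    intro r hr r' hr' hK'
    obtain ⟨r0, _, huniq⟩ := hA r
    exact (huniq r' ⟨hr', hK'⟩).trans (huniq r ⟨hr, by simpa using K.one_mem⟩).symm
  -- the only element of `τ` lying in `H` is `1`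
  have hτH : ∀ t ∈ τ, t ∈ H → t = 1 := by
    intro t ht htH
    obtain ⟨t0, _, huniq⟩ := hτ t (hτK ht)
    exact (huniq t ⟨ht, by simpa using H.one_mem⟩).trans (huniq 1 ⟨hτ1, by simpa using htH⟩).symm
  constructor
  · -- linear independence
    rw [linearIndependent_iff']
    intro s c hsum i hi
    set r : G := (i.1 : G) with hr
    set t : G := (i.2 : G) with ht
    have hrA : r ∈ A := i.1.2
    have htτ : t ∈ τ := i.2.2.1
    have ht1 : t ≠ 1 := i.2.2.2
    have htK : t ∈ K := hτK htτ
    -- fact 1 : for r' ∈ A, r'⁻¹ * (r * t) ∉ H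
    have fact1 : ∀ r' ∈ A, r'⁻¹ * (r * t) ∈ H → False := by
      intro r' hr' hmem
      have hK' : r'⁻¹ * r ∈ K := by
        have : r'⁻¹ * r = (r'⁻¹ * (r * t)) * t⁻¹ := by group
        rw [this]
        exact K.mul_mem (hHK hmem) (K.inv_mem htK)
      have : r' = r := hAuniq r hrA r' hr' hK'
      subst this
      rw [inv_mul_cancel_left] at hmem
      exact ht1 (hτH t htτ hmem)
    -- fact 2 : for r' ∈ A, t' ∈ τ, (r'*t')⁻¹ * (r*t) ∈ H → r' = r ∧ t' = t
    have fact2 : ∀ r' ∈ A, ∀ t' ∈ τ, (r' * t')⁻¹ * (r * t) ∈ H → r' = r ∧ t' = t := by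
      intro r' hr' t' ht' hmem
      have ht'K : t' ∈ K := hτK ht'
      have hK' : r'⁻¹ * r ∈ K := by
        have : r'⁻¹ * r = t' * ((r' * t')⁻¹ * (r * t)) * t⁻¹ := by group
        rw [this]
        exact K.mul_mem (K.mul_mem ht'K (hHK hmem)) (K.inv_mem htK)
      have hrr : r' = r := hAuniq r hrA r' hr' hK'
      subst hrr
      have hmem' : t'⁻¹ * t ∈ H := by
        have heq2 : t'⁻¹ * t = (r * t')⁻¹ * (r * t) := by group
        rw [heq2]; exact hmem
      obtain ⟨t0, _, huniq⟩ := hτ t htK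
      exact ⟨rfl, (huniq t' ⟨ht', hmem'⟩).trans
        (huniq t ⟨htτ, by simpa using H.one_mem⟩).symm⟩
    -- evaluate the relation at the point r * t
    have happ := congrArg (fun x : MonoidAlgebra F G => x.coeff (r * t)) hsum
    simp only [MonoidAlgebra.coeff_zero, Finsupp.coe_zero, Pi.zero_apply] at happ
    rw [MonoidAlgebra.coeff_sum, Finset.sum_apply'] at happ
    have hterm : ∀ j ∈ s, j ≠ i →
        (c j • (MonoidAlgebra.of F G (j.1 : G) *
          (1 - MonoidAlgebra.of F G (j.2 : G)) * hat F H)).coeff (r * t) = 0 := by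
      intro j hj hne
      rw [MonoidAlgebra.coeff_smul_apply, gen_apply]
      have h1 : (j.1 : G)⁻¹ * (r * t) ∈ H → False := fact1 _ j.1.2
      have h2 : ((j.1 : G) * (j.2 : G))⁻¹ * (r * t) ∈ H → False := by
        intro hmem
        obtain ⟨e1, e2⟩ := fact2 _ j.1.2 _ j.2.2.1 hmem
        exact hne (by
          apply Prod.ext <;> apply Subtype.ext
          · exact e1
          · exact e2)
      rw [if_neg h1, if_neg h2]
      simp
    rw [Finset.sum_eq_single_of_mem i hi hterm] at happ
    rw [MonoidAlgebra.coeff_smul_apply, gen_apply, ← hr, ← ht] at happ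
    rw [if_neg (fact1 r hrA),
      if_pos (by rw [inv_mul_cancel]; exact H.one_mem : (r*t)⁻¹ * (r*t) ∈ H)] at happ
    have hc : c i * ((Nat.card H : F)⁻¹ * (0 - 1)) = 0 := happ
    have h2 : (Nat.card H : F)⁻¹ * (0 - 1) ≠ 0 := by
      simp only [zero_sub, mul_neg_one, ne_eq, neg_eq_zero]
      exact inv_ne_zero hHne
    exact (mul_eq_zero.1 hc).resolve_right h2
  · -- the span equality
    apply le_antisymm
    · rw [Submodule.span_le]
      rintro x ⟨p, rfl⟩
      simp only [SetLike.mem_coe, Submodule.restrictScalars_mem]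
      have hz : (MonoidAlgebra.of F G (p.1 : G) * (1 - MonoidAlgebra.of F G (p.2 : G)))
          * hat F K = 0 := by
        simp only [MonoidAlgebra.of_apply]
        rw [mul_assoc, sub_mul, one_mul, single_mul_hat K (hτK p.2.2.1), sub_self, mul_zero]
      refine Submodule.mem_span_singleton.2
        ⟨MonoidAlgebra.of F G (p.1 : G) * (1 - MonoidAlgebra.of F G (p.2 : G)), ?_⟩
      rw [smul_eq_mul, mul_sub, hz, sub_zero]
    · intro x hx
      simp only [Submodule.restrictScalars_mem] at hx
      obtain ⟨a, rfl⟩ := Submodule.mem_span_singleton.1 hx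
      rw [smul_eq_mul]
      set M := Submodule.span F
          (Set.range (fun p : A × ↥(τ \ {1} : Set G) =>
            MonoidAlgebra.of F G (p.1 : G) *
              (1 - MonoidAlgebra.of F G (p.2 : G)) * hat F H)) with hM
      -- key step : each `single g 1 * e` lies in `M`
      have hgen : ∀ g : G, MonoidAlgebra.single g (1:F) * (hat F H - hat F K) ∈ M := by
        intro g
        obtain ⟨r, ⟨hrA, hrK⟩, _⟩ := hA g
        obtain ⟨t, ⟨htτ, htH⟩, _⟩ := hτ (r⁻¹ * g) hrK
        -- the "W" elements
        have hW : ∀ s ∈ τ, MonoidAlgebra.single r (1:F) * hat F H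
            - MonoidAlgebra.single (r*s) (1:F) * hat F H ∈ M := by
          intro s hs
          by_cases hs1 : s = 1
          · subst hs1
            rw [mul_one, sub_self]
            exact Submodule.zero_mem M
          · have := Submodule.subset_span (R := F)
              (Set.mem_range_self (f := (fun p : A × ↥(τ \ {1} : Set G) =>
                MonoidAlgebra.of F G (p.1 : G) *
                  (1 - MonoidAlgebra.of F G (p.2 : G)) * hat F H))
                (⟨⟨r, hrA⟩, ⟨s, ⟨hs, hs1⟩⟩⟩))
            rw [gen_eq] at this
            exact this
        have hWW : ∀ s ∈ τ, ∀ s' ∈ τ, MonoidAlgebra.single (r*s) (1:F) * hat F H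
            - MonoidAlgebra.single (r*s') (1:F) * hat F H ∈ M := by
          intro s hs s' hs'
          have := Submodule.sub_mem M (hW s' hs') (hW s hs)
          have heq : (MonoidAlgebra.single r (1:F) * hat F H
              - MonoidAlgebra.single (r*s') (1:F) * hat F H)
              - (MonoidAlgebra.single r (1:F) * hat F H
              - MonoidAlgebra.single (r*s) (1:F) * hat F H)
              = MonoidAlgebra.single (r*s) (1:F) * hat F H
              - MonoidAlgebra.single (r*s') (1:F) * hat F H := by abel
          rwa [heq] at this
        -- rewrite `single g 1 * hat F H` and `single g 1 * hat F K`
        have e1 : MonoidAlgebra.single g (1:F) * hat F H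
            = MonoidAlgebra.single (r*t) (1:F) * hat F H := by
          have hsg : MonoidAlgebra.single (r*t) (1:F)
              * MonoidAlgebra.single (t⁻¹ * (r⁻¹ * g)) (1:F)
              = MonoidAlgebra.single g (1:F) := by
            rw [MonoidAlgebra.single_mul_single, one_mul]
            congr 1
            group
          rw [← hsg, mul_assoc, single_mul_hat H htH]
        have e2 : MonoidAlgebra.single g (1:F) * hat F K
            = MonoidAlgebra.single r (1:F) * hat F K := by
          have hsg : MonoidAlgebra.single r (1:F)
              * MonoidAlgebra.single (r⁻¹ * g) (1:F)
              = MonoidAlgebra.single g (1:F) := by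
            rw [MonoidAlgebra.single_mul_single, one_mul]
            congr 1
            group
          rw [← hsg, mul_assoc, single_mul_hat K hrK]
        -- express `hat F K` via the transversal τ
        set d : F := (Nat.card H : F) * (Nat.card K : F)⁻¹ with hd
        have e3 : MonoidAlgebra.single r (1:F) * hat F K
            = d • ∑ s ∈ τ.toFinset, MonoidAlgebra.single (r*s) (1:F) * hat F H := by
          have h4 : hat F K = d • ∑ s ∈ τ.toFinset,
              MonoidAlgebra.single s (1:F) * hat F H := by
            rw [tau_sum hchar H K hHK τ hτK hτ, smul_smul, hd]
            have hone : (Nat.card H : F) * (Nat.card K : F)⁻¹ *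
                ((Nat.card K : F) * (Nat.card H : F)⁻¹)
                = ((Nat.card H : F) * (Nat.card H : F)⁻¹) *
                  ((Nat.card K : F)⁻¹ * (Nat.card K : F)) := by ring
            rw [hone, mul_inv_cancel₀ hHne, inv_mul_cancel₀ hKne, one_mul, one_smul]
          rw [h4, mul_smul_comm, Finset.mul_sum]
          congr 1
          refine Finset.sum_congr rfl (fun s _ => ?_)
          rw [← mul_assoc, MonoidAlgebra.single_mul_single, one_mul]
        -- the cardinality relation gives `τ.toFinset.card • d = 1`
        have hcard1 : (τ.toFinset.card : F) * d = 1 := by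
          have := tau_count H K hHK τ hτK hτ
          have hcast : (Nat.card H : F) * (τ.toFinset.card : F) = (Nat.card K : F) := by
            exact_mod_cast congrArg (Nat.cast : ℕ → F) this
          rw [hd, ← mul_assoc, mul_comm (τ.toFinset.card : F), hcast,
            mul_inv_cancel₀ hKne]
        -- final computation
        rw [mul_sub, e1, e2, e3]
        have hfin : MonoidAlgebra.single (r*t) (1:F) * hat F H
            - d • ∑ s ∈ τ.toFinset, MonoidAlgebra.single (r*s) (1:F) * hat F H
            = ∑ s ∈ τ.toFinset, d • (MonoidAlgebra.single (r*t) (1:F) * hat F H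
                - MonoidAlgebra.single (r*s) (1:F) * hat F H) := by
          rw [Finset.sum_congr rfl (fun s _ => smul_sub d _ _), Finset.sum_sub_distrib,
            Finset.sum_const, ← Finset.smul_sum, ← Nat.cast_smul_eq_nsmul F, smul_smul,
            hcard1, one_smul]
        rw [hfin]
        exact Submodule.sum_mem M (fun s hs =>
          Submodule.smul_mem M d (hWW t htτ s (Set.mem_toFinset.1 hs)))
      -- decompose `a` into singles
      have ha : a * (hat F H - hat F K)
          = ∑ g ∈ a.coeff.support, (a.coeff g) • (MonoidAlgebra.single g (1:F) * (hat F H - hat F K)) := by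
        conv_lhs => rw [← MonoidAlgebra.sum_coeff_single a]
        rw [Finsupp.sum, Finset.sum_mul]
        refine Finset.sum_congr rfl (fun g _ => ?_)
        rw [← smul_mul_assoc, MonoidAlgebra.smul_single', mul_one]
      rw [ha]
      exact Submodule.sum_mem M (fun g _ => Submodule.smul_mem M _ (hgen g))
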